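/- The set of homogeneous polynomials of degree 3 in ℝ[x,y,z] that vanish on the union of the planes y+z=0, z+x=0, x+y=0 is a one-dimensional real vector space spanned by (x+y)(y+z)(z+x). -/

import Mathlib

open MvPolynomial

noncomputable def e (i j k : ℕ) : Fin 3 →₀ ℕ :=
  Finsupp.single 0 i + Finsupp.single 1 j + Finsupp.single 2 k

lemma e_apply (i j k : ℕ) : (e i j k) 0 = i ∧ (e i j k) 1 = j ∧ (e i j k) 2 = k := by
  simp [e, Finsupp.single_apply]

lemma e_eq_iff (i j k : ℕ) (m : Fin 3 →₀ ℕ) :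
    e i j k = m ↔ m 0 = i ∧ m 1 = j ∧ m 2 = k := by
  constructor
  · rintro rfl
    exact e_apply i j k
  · rintro ⟨h0, h1, h2⟩
    ext a
    fin_cases a <;> simp [e, Finsupp.single_apply, h0, h1, h2]

lemma deg3 (m : Fin 3 →₀ ℕ) : m.degree = m 0 + m 1 + m 2 := by
  rw [Finsupp.degree_apply, Finset.sum_subset (Finset.subset_univ _)
    (by intro x _ hx; simpa using hx), Fin.sum_univ_three]

lemma monomial_e (i j k : ℕ) (a : ℝ) :
    (monomial (e i j k) a : MvPolynomial (Fin 3) ℝ) = C a * (X 0 ^ i * X 1 ^ j * X 2 ^ k) := by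
  rw [X_pow_eq_monomial, X_pow_eq_monomial, X_pow_eq_monomial, monomial_mul, monomial_mul,
    C_mul_monomial]
  simp [e, add_assoc]

lemma decomp_mono (P : MvPolynomial (Fin 3) ℝ) (hP : P.IsHomogeneous 3) :
    P = monomial (e 3 0 0) (coeff (e 3 0 0) P) + monomial (e 2 1 0) (coeff (e 2 1 0) P) + monomial (e 2 0 1) (coeff (e 2 0 1) P) + monomial (e 1 2 0) (coeff (e 1 2 0) P) + monomial (e 1 1 1) (coeff (e 1 1 1) P) + monomial (e 1 0 2) (coeff (e 1 0 2) P) + monomial (e 0 3 0) (coeff (e 0 3 0) P) + monomial (e 0 2 1) (coeff (e 0 2 1) P) + monomial (e 0 1 2) (coeff (e 0 1 2) P) + monomial (e 0 0 3) (coeff (e 0 0 3) P) := by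
  ext m
  simp only [coeff_add, coeff_monomial, e_eq_iff]
  by_cases h3 : m 0 + m 1 + m 2 = 3
  · obtain ⟨i, hi⟩ : ∃ i, m 0 = i := ⟨_, rfl⟩
    obtain ⟨j, hj⟩ : ∃ j, m 1 = j := ⟨_, rfl⟩
    obtain ⟨k, hk⟩ : ∃ k, m 2 = k := ⟨_, rfl⟩
    have hi3 : i ≤ 3 := by omega
    have hj3 : j ≤ 3 := by omega
    have hk3 : k ≤ 3 := by omega
    interval_cases i <;> interval_cases j <;> interval_cases k <;>
      first
        | omega
        | (simp only [hi, hj, hk]; norm_num;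
           exact congrArg (fun d => coeff d P) ((e_eq_iff _ _ _ m).2 ⟨hi, hj, hk⟩).symm)
  · rw [hP.coeff_eq_zero (by rw [deg3]; omega)]
    repeat rw [if_neg (by omega)]
    norm_num

theorem degree_three_vanishing_spanned_by_S :
    (∀ P : MvPolynomial (Fin 3) ℝ,
      (P.IsHomogeneous 3 ∧
        ∀ v : Fin 3 → ℝ, (v 1 + v 2 = 0 ∨ v 2 + v 0 = 0 ∨ v 0 + v 1 = 0) →
          eval v P = 0) ↔
      P ∈ Submodule.span ℝ
        {((X 0 + X 1) * (X 1 + X 2) * (X 2 + X 0) : MvPolynomial (Fin 3) ℝ)}) ∧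
    ((X 0 + X 1) * (X 1 + X 2) * (X 2 + X 0) : MvPolynomial (Fin 3) ℝ) ≠ 0 := by
  have hS : ((X 0 + X 1) * (X 1 + X 2) * (X 2 + X 0) : MvPolynomial (Fin 3) ℝ).IsHomogeneous 3 := by
    have hX : ∀ i : Fin 3, (X i : MvPolynomial (Fin 3) ℝ).IsHomogeneous 1 :=
      fun i => isHomogeneous_X _ _
    simpa using (((hX 0).add (hX 1)).mul ((hX 1).add (hX 2))).mul ((hX 2).add (hX 0))
  constructor
  · intro P
    constructor
    · rintro ⟨hP, hv⟩
      have hd := decomp_mono P hP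
      simp only [monomial_e] at hd
      set a300 := coeff (e 3 0 0) P with ha300def
      set a210 := coeff (e 2 1 0) P with ha210def
      set a201 := coeff (e 2 0 1) P with ha201def
      set a120 := coeff (e 1 2 0) P with ha120def
      set a111 := coeff (e 1 1 1) P with ha111def
      set a102 := coeff (e 1 0 2) P with ha102def
      set a030 := coeff (e 0 3 0) P with ha030def
      set a021 := coeff (e 0 2 1) P with ha021def
      set a012 := coeff (e 0 1 2) P with ha012def
      set a003 := coeff (e 0 0 3) P with ha003def
      have q0 := hv ![1,0,0] (Or.inl (by norm_num [Matrix.cons_val_two, Matrix.tail_cons, Matrix.head_cons]))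
      have q1 := hv ![0,1,-1] (Or.inl (by norm_num [Matrix.cons_val_two, Matrix.tail_cons, Matrix.head_cons]))
      have q2 := hv ![1,1,-1] (Or.inl (by norm_num [Matrix.cons_val_two, Matrix.tail_cons, Matrix.head_cons]))
      have q3 := hv ![1,-1,1] (Or.inl (by norm_num [Matrix.cons_val_two, Matrix.tail_cons, Matrix.head_cons]))
      have q4 := hv ![0,1,0] (Or.inr (Or.inl (by norm_num [Matrix.cons_val_two, Matrix.tail_cons, Matrix.head_cons])))
      have q5 := hv ![1,0,-1] (Or.inr (Or.inl (by norm_num [Matrix.cons_val_two, Matrix.tail_cons, Matrix.head_cons])))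
      have q6 := hv ![1,-1,-1] (Or.inr (Or.inl (by norm_num [Matrix.cons_val_two, Matrix.tail_cons, Matrix.head_cons])))
      have q7 := hv ![0,0,1] (Or.inr (Or.inr (by norm_num [Matrix.cons_val_two, Matrix.tail_cons, Matrix.head_cons])))
      have q8 := hv ![1,-1,0] (Or.inr (Or.inr (by norm_num [Matrix.cons_val_two, Matrix.tail_cons, Matrix.head_cons])))
      have q9 := hv ![2,1,-1] (Or.inl (by norm_num [Matrix.cons_val_two, Matrix.tail_cons, Matrix.head_cons]))
      have q10 := hv ![1,2,-1] (Or.inr (Or.inl (by norm_num [Matrix.cons_val_two, Matrix.tail_cons, Matrix.head_cons])))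
      have q11 := hv ![2,-2,1] (Or.inr (Or.inr (by norm_num [Matrix.cons_val_two, Matrix.tail_cons, Matrix.head_cons])))
      rw [hd] at q0 q1 q2 q3 q4 q5 q6 q7 q8 q9 q10 q11
      simp only [map_add, map_mul, map_pow, eval_C, eval_X, Matrix.cons_val_zero, Matrix.cons_val_one, Matrix.head_cons, Matrix.cons_val_two, Matrix.tail_cons] at q0 q1 q2 q3 q4 q5 q6 q7 q8 q9 q10 q11
      norm_num at q0 q1 q2 q3 q4 q5 q6 q7 q8 q9 q10 q11
      have h300 : a300 = 0 := by linarith [q0, q1, q2, q3, q4, q5, q6, q7, q8, q9, q10, q11]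
      have h030 : a030 = 0 := by linarith [q0, q1, q2, q3, q4, q5, q6, q7, q8, q9, q10, q11]
      have h003 : a003 = 0 := by linarith [q0, q1, q2, q3, q4, q5, q6, q7, q8, q9, q10, q11]
      have h210 : a210 = a012 := by linarith [q0, q1, q2, q3, q4, q5, q6, q7, q8, q9, q10, q11]
      have h201 : a201 = a012 := by linarith [q0, q1, q2, q3, q4, q5, q6, q7, q8, q9, q10, q11]
      have h120 : a120 = a012 := by linarith [q0, q1, q2, q3, q4, q5, q6, q7, q8, q9, q10, q11]
      have h102 : a102 = a012 := by linarith [q0, q1, q2, q3, q4, q5, q6, q7, q8, q9, q10, q11]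
      have h021 : a021 = a012 := by linarith [q0, q1, q2, q3, q4, q5, q6, q7, q8, q9, q10, q11]
      have h111 : a111 = 2 * a012 := by linarith [q0, q1, q2, q3, q4, q5, q6, q7, q8, q9, q10, q11]
      refine Submodule.mem_span_singleton.2 ⟨a012, ?_⟩
      rw [hd, smul_eq_C_mul, h300, h030, h003, h210, h201, h120, h102, h021, h111]
      simp only [map_zero, map_mul, map_ofNat]
      ring
    · intro hmem
      obtain ⟨c, hc⟩ := Submodule.mem_span_singleton.1 hmem
      subst hc
      constructor
      · rw [smul_eq_C_mul]
        simpa using (isHomogeneous_C _ c).mul hS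
      · intro v h
        have he : eval v ((X 0 + X 1) * (X 1 + X 2) * (X 2 + X 0) : MvPolynomial (Fin 3) ℝ)
            = (v 0 + v 1) * ((v 1 + v 2) * (v 2 + v 0)) := by
          simp only [map_mul, map_add, eval_X]
          ring
        have hz : (v 0 + v 1) * ((v 1 + v 2) * (v 2 + v 0)) = 0 := by
          rcases h with h | h | h <;> rw [h] <;> ring
        rw [smul_eq_C_mul, map_mul, eval_C, he, hz, mul_zero]
  · intro h0
    have h1 := congrArg (eval fun _ => (1 : ℝ)) h0
    simp only [map_mul, map_add, eval_X, map_zero] at h1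
    norm_num at h1
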